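/- For a uniform mesh of (−1/2, 1/2) with nodes x_i = ih, h = 1/(2N), let f be the continuous piecewise affine interpolant of x ↦ cos(mπx) at the nodes (vanishing at ±1/2 since m is odd). Then f satisfies ∫_{−1/2}^{1/2} f′ v′ dx = μ_h ∫_{−1/2}^{1/2} f v dx for all continuous piecewise affine v vanishing at ±1/2, where μ_h = (6/(2 + cos(mπh))) · (1 − cos(mπh))/h². -/

import Mathlib

open Real MeasureTheory intervalIntegral

open Set

lemma aff_deriv {f : ℝ → ℝ} {p q a b : ℝ}
    (hf : ∀ x ∈ Icc p q, f x = a * x + b) {x : ℝ} (hx : x ∈ Ioo p q) :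
    deriv f x = a := by
  have hmem : Icc p q ∈ nhds x := Icc_mem_nhds hx.1 hx.2
  have heq : f =ᶠ[nhds x] fun y => a * y + b :=
    Filter.eventuallyEq_of_mem hmem hf
  rw [heq.deriv_eq]
  have : HasDerivAt (fun y => a * y + b) a x := by
    simpa using ((hasDerivAt_id x).const_mul a).add_const b
  exact this.deriv

lemma stiff_piece {f v : ℝ → ℝ} {p q a b c d : ℝ} (hpq : p < q)
    (hf : ∀ x ∈ Icc p q, f x = a * x + b) (hv : ∀ x ∈ Icc p q, v x = c * x + d) :
    ∫ x in p..q, deriv f x * deriv v x = (f q - f p) * (v q - v p) / (q - p) := by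
  rw [intervalIntegral.integral_of_le hpq.le, MeasureTheory.integral_Ioc_eq_integral_Ioo]
  rw [MeasureTheory.setIntegral_congr_fun measurableSet_Ioo
    (fun x hx => by rw [aff_deriv hf hx, aff_deriv hv hx] : Set.EqOn _ (fun _ => a * c) _)]
  rw [MeasureTheory.setIntegral_const, measureReal_def, Real.volume_Ioo,
    ENNReal.toReal_ofReal (by linarith : (0:ℝ) ≤ q - p), smul_eq_mul]
  rw [hf p (by constructor <;> linarith), hf q (by constructor <;> linarith),
    hv p (by constructor <;> linarith), hv q (by constructor <;> linarith)]
  rw [eq_div_iff (sub_ne_zero.2 hpq.ne')]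
  ring

lemma stiff_intble {f v : ℝ → ℝ} {p q a b c d : ℝ} (hpq : p < q)
    (hf : ∀ x ∈ Icc p q, f x = a * x + b) (hv : ∀ x ∈ Icc p q, v x = c * x + d) :
    IntervalIntegrable (fun x => deriv f x * deriv v x) volume p q := by
  rw [intervalIntegrable_iff_integrableOn_Ioo_of_le hpq.le]
  refine (MeasureTheory.integrableOn_const (C := a * c) ?_).congr_fun
    (fun x hx => by rw [aff_deriv hf hx, aff_deriv hv hx]) measurableSet_Ioo
  · simp [Real.volume_Ioo]

lemma mass_piece {f v : ℝ → ℝ} {p q a b c d : ℝ} (hpq : p < q)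
    (hf : ∀ x ∈ Icc p q, f x = a * x + b) (hv : ∀ x ∈ Icc p q, v x = c * x + d) :
    ∫ x in p..q, f x * v x =
      (q - p) / 6 * (2 * f p * v p + f p * v q + f q * v p + 2 * f q * v q) := by
  have heq : Set.EqOn (fun x => f x * v x) (fun x => (a * x + b) * (c * x + d)) (Set.uIcc p q) := by
    intro x hx
    rw [Set.uIcc_of_le hpq.le] at hx
    simp only [hf x hx, hv x hx]
  rw [intervalIntegral.integral_congr heq]
  have key : ∀ x : ℝ, HasDerivAt (fun y => a*c*y^3/3 + (a*d+b*c)*y^2/2 + b*d*y)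
      ((a * x + b) * (c * x + d)) x := by
    intro x
    have h1 : HasDerivAt (fun y : ℝ => a*c*y^3/3 + (a*d+b*c)*y^2/2 + b*d*y)
        (a*c*(3*x^2)/3 + (a*d+b*c)*(2*x)/2 + b*d) x := by
      apply HasDerivAt.add
      apply HasDerivAt.add
      · simpa using (((hasDerivAt_pow 3 x).const_mul (a*c)).div_const 3)
      · simpa using (((hasDerivAt_pow 2 x).const_mul (a*d+b*c)).div_const 2)
      · simpa using (hasDerivAt_id x).const_mul (b*d)
    convert h1 using 1; ring
  rw [intervalIntegral.integral_eq_sub_of_hasDerivAt (fun x _ => key x)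
    (by apply Continuous.intervalIntegrable; continuity)]
  rw [hf p (by constructor <;> linarith), hf q (by constructor <;> linarith),
    hv p (by constructor <;> linarith), hv q (by constructor <;> linarith)]
  ring
lemma sum_identity (n : ℕ) (F V Fm : ℕ → ℝ) (c : ℝ)
    (rec1 : ∀ k, F (k+2) + F k = 2*c*F (k+1))
    (rec2 : ∀ k, F (k+1) + Fm k = 2*c*F k)
    (hFm : ∀ k, Fm (k+1) = F k)
    (hV0 : V 0 = 0) (hVn : V n = 0) :
    (2+c) * (∑ k ∈ Finset.range n, (F (k+1) - F k) * (V (k+1) - V k))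
      = (1-c) * (∑ k ∈ Finset.range n,
          (2*F k*V k + F k*V (k+1) + F (k+1)*V k + 2*F (k+1)*V (k+1))) := by
  have term : ∀ k, (2+c)*((F (k+1) - F k)*(V (k+1) - V k))
      - (1-c)*(2*F k*V k + F k*V (k+1) + F (k+1)*V k + 2*F (k+1)*V (k+1))
      = (3/2)*(V (k+1)*(F ((k+1)+1) - Fm (k+1)) - V k*(F (k+1) - Fm k)) := by
    intro k
    have r1 := rec1 k
    have r2 := rec2 k
    have hm := hFm k
    linear_combination (-(3/2)*V (k+1))*r1 + (-(3/2)*V k)*r2 + ((3/2)*V (k+1))*hm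
  have tel := Finset.sum_range_sub (fun j => V j * (F (j+1) - Fm j)) n
  have main : (2+c) * (∑ k ∈ Finset.range n, (F (k+1) - F k) * (V (k+1) - V k))
      - (1-c) * (∑ k ∈ Finset.range n,
          (2*F k*V k + F k*V (k+1) + F (k+1)*V k + 2*F (k+1)*V (k+1)))
      = (3/2) * (V n * (F (n+1) - Fm n) - V 0 * (F 1 - Fm 0)) := by
    rw [Finset.mul_sum, Finset.mul_sum, ← Finset.sum_sub_distrib]
    rw [Finset.sum_congr rfl (fun k _ => term k), ← Finset.mul_sum]
    rw [tel]
  rw [hV0, hVn] at main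
  linarith [main]

/-- On a uniform mesh of `(-1/2, 1/2)` with nodes `x_i = i h`, `h = 1/(2N)`,
`N = (m+1)²/2` with `m` odd, the continuous piecewise affine interpolant `f` of
`x ↦ cos(mπx)` at the nodes satisfies the discrete eigenvalue identity
`∫ f′ v′ = μ_h ∫ f v` for every continuous piecewise affine `v` vanishing at `±1/2`,
where `μ_h = (6/(2 + cos(mπh)))(1 - cos(mπh))/h²`. -/
theorem interpolant_discrete_eigenfunction (m N : ℕ) (hm : Odd m) (hm0 : 0 < m)
    (hN : 2 * N = (m + 1) ^ 2)
    (h : ℝ) (hh : h = 1 / (2 * (N:ℝ)))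
    (f v : ℝ → ℝ)
    -- `f` is the continuous piecewise affine nodal interpolant of `cos(mπ·)`
    (hfc : ContinuousOn f (Set.Icc (-(1/2) : ℝ) (1/2)))
    (hfnodes : ∀ i : ℤ, -(N:ℤ) ≤ i → i ≤ (N:ℤ) →
      f ((i:ℝ) * h) = Real.cos ((m:ℝ) * π * ((i:ℝ) * h)))
    (hfaff : ∀ i : ℤ, -(N:ℤ) ≤ i → i < (N:ℤ) → ∃ a b : ℝ,
      ∀ x ∈ Set.Icc ((i:ℝ) * h) (((i:ℝ) + 1) * h), f x = a * x + b)
    -- `v` is continuous piecewise affine and vanishes at `±1/2`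
    (hvc : ContinuousOn v (Set.Icc (-(1/2) : ℝ) (1/2)))
    (hvaff : ∀ i : ℤ, -(N:ℤ) ≤ i → i < (N:ℤ) → ∃ a b : ℝ,
      ∀ x ∈ Set.Icc ((i:ℝ) * h) (((i:ℝ) + 1) * h), v x = a * x + b)
    (hv0l : v (-(1/2)) = 0) (hv0r : v (1/2) = 0) :
    ∫ x in Set.Ioo (-(1/2) : ℝ) (1/2), deriv f x * deriv v x =
      (6 / (2 + Real.cos ((m:ℝ) * π * h)) * ((1 - Real.cos ((m:ℝ) * π * h)) / h ^ 2)) *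
        ∫ x in Set.Ioo (-(1/2) : ℝ) (1/2), f x * v x := by
  -- basic positivity facts
  have hNpos : 0 < N := by nlinarith [hN]
  have hNR : (0:ℝ) < (N:ℝ) := by exact_mod_cast hNpos
  have hhpos : 0 < h := by rw [hh]; positivity
  have hNh : (N:ℝ) * h = 1/2 := by rw [hh]; field_simp
  -- the mesh nodes
  set a : ℕ → ℝ := fun k => ((k:ℝ) - (N:ℝ)) * h with ha
  have hsucc : ∀ k : ℕ, a (k+1) = a k + h := by
    intro k; simp only [ha]; push_cast; ring
  have ha0 : a 0 = -(1/2) := by simp only [ha]; push_cast; linarith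
  have ha2N : a (2*N) = 1/2 := by simp only [ha]; push_cast; linarith
  have hlt : ∀ k : ℕ, a k < a (k+1) := by
    intro k; rw [hsucc]; linarith
  have hbound : ∀ k : ℕ, k ≤ 2*N → -(1/2) ≤ a k ∧ a k ≤ 1/2 := by
    intro k hk
    have hkR : (k:ℝ) ≤ 2*N := by exact_mod_cast hk
    have hk0 : (0:ℝ) ≤ (k:ℝ) := Nat.cast_nonneg k
    constructor
    · simp only [ha]; nlinarith
    · simp only [ha]; nlinarith
  have hsub : ∀ k : ℕ, k < 2*N → Set.uIcc (a k) (a (k+1)) ⊆ Set.Icc (-(1/2):ℝ) (1/2) := by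
    intro k hk
    rw [Set.uIcc_of_le (hlt k).le]
    intro x hx
    have h1 := (hbound k (by omega)).1
    have h2 := (hbound (k+1) (by omega)).2
    exact ⟨le_trans h1 hx.1, le_trans hx.2 h2⟩
  -- endpoint identities for the cast index
  have hcastL : ∀ k : ℕ, ((((k:ℤ) - (N:ℤ)):ℤ):ℝ) * h = a k := by
    intro k; simp only [ha]; push_cast; ring
  have hcastR : ∀ k : ℕ, (((((k:ℤ) - (N:ℤ)):ℤ):ℝ) + 1) * h = a (k+1) := by
    intro k; simp only [ha]; push_cast; ring
  -- affine data on each cell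
  have haffF : ∀ k : ℕ, k < 2*N → ∃ A B : ℝ,
      ∀ x ∈ Set.Icc (a k) (a (k+1)), f x = A*x+B := by
    intro k hk
    obtain ⟨A, B, hAB⟩ := hfaff ((k:ℤ) - N) (by omega) (by omega)
    exact ⟨A, B, fun x hx => hAB x (by rw [hcastL k, hcastR k]; exact hx)⟩
  have haffV : ∀ k : ℕ, k < 2*N → ∃ A B : ℝ,
      ∀ x ∈ Set.Icc (a k) (a (k+1)), v x = A*x+B := by
    intro k hk
    obtain ⟨A, B, hAB⟩ := hvaff ((k:ℤ) - N) (by omega) (by omega)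
    exact ⟨A, B, fun x hx => hAB x (by rw [hcastL k, hcastR k]; exact hx)⟩
  -- nodal values of f
  have hfa : ∀ k : ℕ, k ≤ 2*N → f (a k) = Real.cos ((m:ℝ) * π * a k) := by
    intro k hk
    have := hfnodes ((k:ℤ) - N) (by omega) (by omega)
    rwa [hcastL k] at this
  -- the stiffness integral as a sum
  have hstiff : ∫ x in Set.Ioo (-(1/2) : ℝ) (1/2), deriv f x * deriv v x
      = ∑ k ∈ Finset.range (2*N),
          (f (a (k+1)) - f (a k)) * (v (a (k+1)) - v (a k)) / h := by
    rw [← MeasureTheory.integral_Ioc_eq_integral_Ioo,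
      ← intervalIntegral.integral_of_le (by norm_num : (-(1/2):ℝ) ≤ 1/2)]
    rw [← ha0, ← ha2N]
    rw [← intervalIntegral.sum_integral_adjacent_intervals (f := fun x => deriv f x * deriv v x)
      (fun k hk => by
        obtain ⟨A, B, hAB⟩ := haffF k hk
        obtain ⟨C, D, hCD⟩ := haffV k hk
        exact stiff_intble (hlt k) hAB hCD)]
    refine Finset.sum_congr rfl (fun k hk => ?_)
    obtain ⟨A, B, hAB⟩ := haffF k (Finset.mem_range.1 hk)
    obtain ⟨C, D, hCD⟩ := haffV k (Finset.mem_range.1 hk)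
    rw [stiff_piece (hlt k) hAB hCD, hsucc k]
    ring_nf
  -- the mass integral as a sum
  have hmass : ∫ x in Set.Ioo (-(1/2) : ℝ) (1/2), f x * v x
      = ∑ k ∈ Finset.range (2*N), h/6 *
          (2 * f (a k) * v (a k) + f (a k) * v (a (k+1))
            + f (a (k+1)) * v (a k) + 2 * f (a (k+1)) * v (a (k+1))) := by
    rw [← MeasureTheory.integral_Ioc_eq_integral_Ioo,
      ← intervalIntegral.integral_of_le (by norm_num : (-(1/2):ℝ) ≤ 1/2)]
    rw [← ha0, ← ha2N]
    rw [← intervalIntegral.sum_integral_adjacent_intervals (f := fun x => f x * v x)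
      (fun k hk => ((hfc.mono (hsub k hk)).mul (hvc.mono (hsub k hk))).intervalIntegrable)]
    refine Finset.sum_congr rfl (fun k hk => ?_)
    obtain ⟨A, B, hAB⟩ := haffF k (Finset.mem_range.1 hk)
    obtain ⟨C, D, hCD⟩ := haffV k (Finset.mem_range.1 hk)
    rw [mass_piece (hlt k) hAB hCD, hsucc k]
    ring_nf
  -- abbreviations for the nodal sequences
  set G : ℕ → ℝ := fun k => Real.cos ((m:ℝ) * π * a k) with hG
  set Gm : ℕ → ℝ := fun k => Real.cos ((m:ℝ) * π * (a k - h)) with hGm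
  set W : ℕ → ℝ := fun k => v (a k) with hW
  set c : ℝ := Real.cos ((m:ℝ) * π * h) with hc
  have rec1 : ∀ k : ℕ, G (k+2) + G k = 2*c*G (k+1) := by
    intro k
    have e2 : (m:ℝ) * π * a (k+2) = (m:ℝ) * π * a (k+1) + (m:ℝ) * π * h := by
      rw [hsucc (k+1)]; ring
    have e0 : (m:ℝ) * π * a k = (m:ℝ) * π * a (k+1) - (m:ℝ) * π * h := by
      rw [hsucc k]; ring
    simp only [hG, hc]
    rw [e2, e0, Real.cos_add, Real.cos_sub]; ring
  have rec2 : ∀ k : ℕ, G (k+1) + Gm k = 2*c*G k := by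
    intro k
    have e1 : (m:ℝ) * π * a (k+1) = (m:ℝ) * π * a k + (m:ℝ) * π * h := by
      rw [hsucc k]; ring
    have e0 : (m:ℝ) * π * (a k - h) = (m:ℝ) * π * a k - (m:ℝ) * π * h := by ring
    simp only [hG, hGm, hc]
    rw [e1, e0, Real.cos_add, Real.cos_sub]; ring
  have hGmsucc : ∀ k : ℕ, Gm (k+1) = G k := by
    intro k
    simp only [hG, hGm]
    congr 1
    rw [hsucc k]; ring
  have hW0 : W 0 = 0 := by simp only [hW]; rw [ha0]; exact hv0l
  have hWn : W (2*N) = 0 := by simp only [hW]; rw [ha2N]; exact hv0r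
  have key := sum_identity (2*N) G W Gm c rec1 rec2 hGmsucc hW0 hWn
  -- rewrite nodal values of f in the sums
  have hstiff' : ∫ x in Set.Ioo (-(1/2) : ℝ) (1/2), deriv f x * deriv v x
      = (∑ k ∈ Finset.range (2*N), (G (k+1) - G k) * (W (k+1) - W k)) / h := by
    rw [hstiff, ← Finset.sum_div]
    congr 1
    refine Finset.sum_congr rfl (fun k hk => ?_)
    have hk' := Finset.mem_range.1 hk
    rw [hfa k (by omega), hfa (k+1) (by omega)]
  have hmass' : ∫ x in Set.Ioo (-(1/2) : ℝ) (1/2), f x * v x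
      = h/6 * ∑ k ∈ Finset.range (2*N),
          (2*G k*W k + G k*W (k+1) + G (k+1)*W k + 2*G (k+1)*W (k+1)) := by
    rw [hmass, Finset.mul_sum]
    refine Finset.sum_congr rfl (fun k hk => ?_)
    have hk' := Finset.mem_range.1 hk
    rw [hfa k (by omega), hfa (k+1) (by omega)]
  rw [hstiff', hmass']
  have hcpos : (0:ℝ) < 2 + c := by
    have := Real.neg_one_le_cos ((m:ℝ) * π * h)
    rw [← hc] at this; linarith
  set A := ∑ k ∈ Finset.range (2*N), (G (k+1) - G k) * (W (k+1) - W k)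
  set B := ∑ k ∈ Finset.range (2*N),
      (2*G k*W k + G k*W (k+1) + G (k+1)*W k + 2*G (k+1)*W (k+1))
  have hhne : h ≠ 0 := ne_of_gt hhpos
  have h2c : (2 + c) ≠ 0 := ne_of_gt hcpos
  have hrhs : 6 / (2+c) * ((1-c)/h^2) * (h/6*B) = ((1-c)*B)/((2+c)*h) := by
    field_simp
  rw [hrhs, div_eq_div_iff hhne (by positivity)]
  linear_combination h * key
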